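/- Let n₁, n₂, m₃ be natural numbers and let s ∈ ℂ with Re s > 1/2. Then ∫_{Y>0} Y₁₁^{n₁} · Y₂₂^{n₂} · Y₁₂^{2m₃} · det(Y)^s · e^{−tr(Y)} dY_inv = Γ₂(s) · ((2m₃)! / (2^{2m₃} · m₃!)) · Σ_{k=0}^{min(n₁,n₂)} (−1)^k · C(n₁,k) · C(n₂,k) · k! · Π_{l=0}^{n₁+n₂+m₃−k−1}(s+l). -/

import Mathlib

open Finset MeasureTheory Set


/-- Core Vandermonde-type identity for products `(a)_n`. -/
lemma poch_core (a : ℂ) (n1 : ℕ) : ∀ n2 : ℕ,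
    (∏ l ∈ range n1, (a + l)) * ∏ l ∈ range n2, (a + l) =
      ∑ k ∈ range (n2 + 1), (-1 : ℂ) ^ k * (n1.choose k) * (n2.choose k) * (k.factorial) *
        ∏ l ∈ range (n1 + n2 - k), (a + l) := by
  intro n2
  induction n2 with
  | zero => simp
  | succ n2 ih =>
    have key : ∀ k ∈ range (n2 + 1),
        ((-1 : ℂ) ^ (k+1) * (n1.choose (k+1)) * (n2.choose k) * ((k+1).factorial) *
          ∏ l ∈ range (n1 + n2 - k), (a + l))
        = -((-1 : ℂ) ^ k * (n1.choose k) * (n2.choose k) * (k.factorial) *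
            (((n1 : ℂ) - k) * ∏ l ∈ range (n1 + n2 - k), (a + l))) := by
      intro k _
      have h1 : (n1.choose (k+1) : ℂ) * ((k+1).factorial) =
          (n1.choose k : ℂ) * (k.factorial) * ((n1 : ℂ) - k) := by
        rcases le_or_gt k n1 with hk | hk
        · have := Nat.choose_succ_right_eq n1 k
          have hcast : (n1.choose (k+1) : ℂ) * (k+1) = (n1.choose k : ℂ) * ((n1 : ℂ) - k) := by
            have : ((n1.choose (k+1) * (k+1) : ℕ) : ℂ) = ((n1.choose k * (n1 - k) : ℕ) : ℂ) :=
              congrArg (Nat.cast : ℕ → ℂ) this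
            push_cast [Nat.cast_sub hk] at this
            linear_combination this
          calc (n1.choose (k+1) : ℂ) * ((k+1).factorial)
              = ((n1.choose (k+1) : ℂ) * (k+1)) * (k.factorial) := by
                push_cast [Nat.factorial_succ]; ring
            _ = (n1.choose k : ℂ) * (k.factorial) * ((n1:ℂ) - k) := by rw [hcast]; ring
        · have h1 : n1.choose (k+1) = 0 := Nat.choose_eq_zero_of_lt (by omega)
          have h2 : n1.choose k = 0 := Nat.choose_eq_zero_of_lt hk
          simp [h1, h2]
      rw [pow_succ]
      push_cast
      linear_combination (-(-1:ℂ)^k) * (n2.choose k) * (∏ l ∈ range (n1 + n2 - k), (a + l)) * h1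
    rw [Finset.sum_range_succ']
    have split : ∀ i ∈ range (n2 + 1),
        (-1 : ℂ) ^ (i+1) * (n1.choose (i+1)) * ((n2+1).choose (i+1)) * ((i+1).factorial) *
          ∏ l ∈ range (n1 + (n2+1) - (i+1)), (a + l)
        = ((-1 : ℂ) ^ (i+1) * (n1.choose (i+1)) * (n2.choose i) * ((i+1).factorial) *
            ∏ l ∈ range (n1 + n2 - i), (a + l))
          + ((-1 : ℂ) ^ (i+1) * (n1.choose (i+1)) * (n2.choose (i+1)) * ((i+1).factorial) *
            ∏ l ∈ range (n1 + n2 - i), (a + l)) := by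
      intro i _
      have hidx : n1 + (n2+1) - (i+1) = n1 + n2 - i := by omega
      rw [hidx, Nat.choose_succ_succ]
      push_cast
      ring
    rw [Finset.sum_congr rfl split, Finset.sum_add_distrib]
    -- the A-sum equals -V
    rw [Finset.sum_congr rfl key]
    -- B-sum + k=0 term
    have hB : (∑ i ∈ range (n2 + 1),
          (-1 : ℂ) ^ (i+1) * (n1.choose (i+1)) * (n2.choose (i+1)) * ((i+1).factorial) *
            ∏ l ∈ range (n1 + n2 - i), (a + l))
        + ((-1 : ℂ) ^ 0 * (n1.choose 0) * ((n2+1).choose 0) * (Nat.factorial 0) *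
            ∏ l ∈ range (n1 + (n2+1) - 0), (a + l))
        = ∑ k ∈ range (n2 + 2),
            (-1 : ℂ) ^ k * (n1.choose k) * (n2.choose k) * (k.factorial) *
              ∏ l ∈ range (n1 + n2 + 1 - k), (a + l) := by
      conv_rhs => rw [Finset.sum_range_succ']
      congr 1
      · apply Finset.sum_congr rfl
        intro i _
        have hidx : n1 + n2 + 1 - (i+1) = n1 + n2 - i := by omega
        rw [hidx]
      · have hidx : n1 + (n2+1) - 0 = n1 + n2 + 1 - 0 := by omega
        rw [hidx]
        norm_num
    rw [add_assoc, hB,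
      Finset.sum_range_succ (fun k => (-1 : ℂ) ^ k * (n1.choose k) * (n2.choose k) *
        (k.factorial) * ∏ l ∈ range (n1 + n2 + 1 - k), (a + l)) (n2+1)]
    have hz : (n2.choose (n2+1) : ℂ) = 0 := by
      simp [Nat.choose_eq_zero_of_lt]
    rw [hz]
    have hU : ∀ k ∈ range (n2 + 1),
        (-1 : ℂ) ^ k * (n1.choose k) * (n2.choose k) * (k.factorial) *
            ∏ l ∈ range (n1 + n2 + 1 - k), (a + l)
        = (a + n2) * ((-1 : ℂ) ^ k * (n1.choose k) * (n2.choose k) * (k.factorial) *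
              ∏ l ∈ range (n1 + n2 - k), (a + l))
          + ((-1 : ℂ) ^ k * (n1.choose k) * (n2.choose k) * (k.factorial) *
              (((n1 : ℂ) - k) * ∏ l ∈ range (n1 + n2 - k), (a + l))) := by
      intro k hk
      have hk' : k ≤ n2 := by simpa [Nat.lt_succ_iff] using hk
      have hidx : n1 + n2 + 1 - k = (n1 + n2 - k) + 1 := by omega
      rw [hidx, Finset.prod_range_succ]
      have hcast : ((n1 + n2 - k : ℕ) : ℂ) = (n1 : ℂ) + n2 - k := by
        push_cast [Nat.cast_sub (by omega : k ≤ n1 + n2)]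
        ring
      rw [hcast]
      ring
    rw [Finset.sum_congr rfl hU, Finset.sum_add_distrib, ← Finset.mul_sum, ← ih,
      Finset.prod_range_succ]
    simp only [Finset.sum_neg_distrib]
    ring

lemma poch_min (a : ℂ) (n1 n2 : ℕ) :
    ∑ k ∈ range (min n1 n2 + 1), (-1 : ℂ) ^ k * (n1.choose k) * (n2.choose k) * (k.factorial) *
        ∏ l ∈ range (n1 + n2 - k), (a + l)
      = (∏ l ∈ range n1, (a + l)) * ∏ l ∈ range n2, (a + l) := by
  rw [poch_core]
  apply Finset.sum_subset
  · exact Finset.range_subset_range.2 (by omega)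
  · intro k hk hk'
    simp only [Finset.mem_range, Nat.lt_succ_iff, not_le] at hk hk'
    have : n1 < k ∨ n2 < k := by omega
    rcases this with h | h
    · simp [Nat.choose_eq_zero_of_lt h]
    · simp [Nat.choose_eq_zero_of_lt h]

lemma Gamma_shift (z : ℂ) (hz : 0 < z.re) (n : ℕ) :
    Complex.Gamma (z + n) = Complex.Gamma z * ∏ l ∈ range n, (z + l) := by
  induction n with
  | zero => simp
  | succ n ih =>
    have hne : z + n ≠ 0 := by
      intro h
      have : (z + n).re = 0 := by rw [h]; simp
      simp only [Complex.add_re, Complex.natCast_re] at this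
      have : (0:ℝ) ≤ (n:ℝ) := Nat.cast_nonneg n
      linarith [hz]
    have : z + ((n:ℂ) + 1) = (z + n) + 1 := by ring
    rw [show ((n+1 : ℕ) : ℂ) = (n : ℂ) + 1 by push_cast; ring, this,
      Complex.Gamma_add_one _ hne, ih, Finset.prod_range_succ]
    ring

lemma Gamma_half (m : ℕ) :
    Complex.Gamma ((m : ℂ) + 1/2) =
      (Real.sqrt Real.pi : ℂ) * ((2*m).factorial) / (2^(2*m) * (m.factorial)) := by
  induction m with
  | zero =>
    simp only [Nat.cast_zero, zero_add, Nat.mul_zero, Nat.factorial_zero, pow_zero]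
    rw [Complex.Gamma_one_half_eq]
    rw [show ((Real.sqrt Real.pi : ℝ) : ℂ) = ((Real.pi ^ ((1:ℝ)/2) : ℝ) : ℂ) by
      rw [Real.sqrt_eq_rpow]]
    rw [Complex.ofReal_cpow Real.pi_nonneg]
    norm_num
  | succ m ih =>
    have hne : (m : ℂ) + 1/2 ≠ 0 := by
      intro h
      have : ((m : ℂ) + 1/2).re = 0 := by rw [h]; simp
      simp only [Complex.add_re, Complex.natCast_re] at this
      have : (0:ℝ) ≤ (m:ℝ) := Nat.cast_nonneg m
      norm_num at *
      linarith
    have h1 : ((m+1 : ℕ) : ℂ) + 1/2 = ((m:ℂ) + 1/2) + 1 := by push_cast; ring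
    rw [h1, Complex.Gamma_add_one _ hne, ih]
    have hf : ((2*(m+1)).factorial : ℂ) = (2*m+2) * (2*m+1) * ((2*m).factorial) := by
      have : 2*(m+1) = (2*m+1) + 1 := by ring
      rw [this, Nat.factorial_succ, Nat.factorial_succ]
      push_cast; ring
    rw [hf]
    have hm1 : ((m+1).factorial : ℂ) = (m+1) * (m.factorial) := by
      rw [Nat.factorial_succ]; push_cast; ring
    rw [hm1]
    have h2 : ((2:ℂ)^(2*(m+1))) = 4 * 2^(2*m) := by ring
    rw [h2]
    have hd1 : ((2:ℂ)^(2*m)) ≠ 0 := pow_ne_zero _ two_ne_zero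
    have hd2 : ((m.factorial : ℂ)) ≠ 0 := by exact_mod_cast Nat.factorial_ne_zero m
    have hd3 : ((m:ℂ) + 1) ≠ 0 := by
      intro h
      have : ((m : ℂ) + 1).re = 0 := by rw [h]; simp
      simp only [Complex.add_re, Complex.natCast_re, Complex.one_re] at this
      have : (0:ℝ) ≤ (m:ℝ) := Nat.cast_nonneg m
      linarith
    field_simp
    ring

lemma gamma_int (z : ℂ) (hz : 0 < z.re) :
    ∫ y in Set.Ioi (0:ℝ), (y:ℂ)^(z-1) * Complex.exp (-(y:ℂ)) = Complex.Gamma z := by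
  rw [Complex.Gamma_eq_integral hz, Complex.GammaIntegral]
  apply MeasureTheory.integral_congr_ae
  filter_upwards with y
  rw [← Complex.ofReal_neg, Complex.ofReal_exp]
  ring

lemma beta_Ioo (u v : ℂ) :
    Complex.betaIntegral u v
      = ∫ x in Set.Ioo (0:ℝ) 1, (x:ℂ)^(u-1) * ((1-x:ℝ):ℂ)^(v-1) := by
  rw [Complex.betaIntegral, intervalIntegral.integral_of_le zero_le_one,
    MeasureTheory.integral_Ioc_eq_integral_Ioo]
  apply MeasureTheory.integral_congr_ae
  filter_upwards with x
  push_cast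
  ring_nf

lemma beta_integrable (u v : ℂ) (hu : 0 < u.re) (hv : 0 < v.re) :
    MeasureTheory.IntegrableOn
      (fun x : ℝ => (x:ℂ)^(u-1) * ((1-x:ℝ):ℂ)^(v-1)) (Set.Ioo 0 1) := by
  have h := Complex.betaIntegral_convergent hu hv
  rw [intervalIntegrable_iff_integrableOn_Ioc_of_le zero_le_one] at h
  have h2 := h.mono_set Set.Ioo_subset_Ioc_self
  apply h2.congr_fun _ measurableSet_Ioo
  intro x _
  push_cast
  ring_nf

lemma sq_image : (fun u : ℝ => u^2) '' Set.Ioo 0 1 = Set.Ioo (0:ℝ) 1 := by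
  ext v
  constructor
  · rintro ⟨u, hu, rfl⟩
    refine ⟨pow_pos hu.1 2, ?_⟩
    show u^2 < 1
    nlinarith [hu.1, hu.2]
  · intro hv
    refine ⟨Real.sqrt v, ⟨Real.sqrt_pos.2 hv.1, ?_⟩, ?_⟩
    · have := Real.sqrt_lt_sqrt (le_of_lt hv.1) hv.2
      simpa using this
    · simp [Real.sq_sqrt (le_of_lt hv.1)]

lemma sq_deriv : ∀ x ∈ Set.Ioo (0:ℝ) 1,
    HasDerivWithinAt (fun u : ℝ => u^2) (2*x) (Set.Ioo 0 1) x := by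
  intro x _
  simpa using (hasDerivAt_pow 2 x).hasDerivWithinAt

lemma sq_injOn : Set.InjOn (fun u : ℝ => u^2) (Set.Ioo 0 1) := by
  intro a ha b hb h
  simp only at h
  have h0 : (a-b)*(a+b) = 0 := by linear_combination h
  rcases mul_eq_zero.1 h0 with h' | h'
  · linarith
  · linarith [ha.1, hb.1]

lemma cpow_sq_pos {u : ℝ} (hu : 0 < u) (m : ℕ) :
    ((u^2 : ℝ):ℂ)^((m:ℂ) + 1/2 - 1) = (u:ℂ)^(2*m) * (u:ℂ)⁻¹ := by
  have he : ((m:ℂ) + 1/2 - 1) = (((m:ℝ) - 1/2 : ℝ) : ℂ) := by push_cast; ring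
  rw [he, ← Complex.ofReal_cpow (sq_nonneg u)]
  have hreal : (u^2) ^ ((m:ℝ) - 1/2) = u^(2*m) * u⁻¹ := by
    rw [← Real.rpow_natCast u 2, ← Real.rpow_mul (le_of_lt hu)]
    have : ((2:ℕ):ℝ) * ((m:ℝ) - 1/2) = ((2*m:ℕ):ℝ) + (-1) := by push_cast; ring
    rw [this, Real.rpow_add hu, Real.rpow_natCast, Real.rpow_neg_one]
  rw [hreal]
  push_cast
  ring

lemma cov_sq (m : ℕ) (w : ℂ) :
    ∫ v in Set.Ioo (0:ℝ) 1, (v:ℂ)^((m:ℂ) + 1/2 - 1) * ((1-v:ℝ):ℂ)^w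
      = 2 * ∫ u in Set.Ioo (0:ℝ) 1, (u:ℂ)^(2*m) * ((1 - u^2 : ℝ):ℂ)^w := by
  conv_lhs => rw [← sq_image]
  rw [MeasureTheory.integral_image_eq_integral_abs_deriv_smul measurableSet_Ioo
    sq_deriv sq_injOn]
  rw [← MeasureTheory.integral_const_mul]
  apply MeasureTheory.setIntegral_congr_fun measurableSet_Ioo
  intro u hu
  have hu0 : (0:ℝ) < u := hu.1
  have hune : (u:ℂ) ≠ 0 := by exact_mod_cast ne_of_gt hu0
  simp only [Complex.real_smul]
  rw [abs_of_pos (by linarith : (0:ℝ) < 2*u)]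
  rw [cpow_sq_pos hu0 m]
  push_cast
  field_simp

lemma cov_sq_integrable (m : ℕ) (w : ℂ) (hw : 0 < w.re + 1) :
    MeasureTheory.IntegrableOn
      (fun u : ℝ => (u:ℂ)^(2*m) * ((1 - u^2 : ℝ):ℂ)^w) (Set.Ioo 0 1) := by
  have hb := beta_integrable ((m:ℂ) + 1/2) (w + 1)
    (by simp [Complex.add_re]; positivity) (by simpa [Complex.add_re] using hw)
  simp only [add_sub_cancel_right] at hb
  rw [← sq_image] at hb
  rw [MeasureTheory.integrableOn_image_iff_integrableOn_abs_deriv_smul measurableSet_Ioo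
    sq_deriv sq_injOn] at hb
  have hb2 : MeasureTheory.IntegrableOn
      (fun x : ℝ => (2⁻¹ : ℂ) * (|2*x| • (((x^2:ℝ):ℂ)^((m:ℂ) + 1/2 - 1) * ((1-x^2:ℝ):ℂ)^w)))
      (Set.Ioo 0 1) := hb.const_mul _
  apply hb2.congr_fun _ measurableSet_Ioo
  intro u hu
  have hu0 : (0:ℝ) < u := hu.1
  have hune : (u:ℂ) ≠ 0 := by exact_mod_cast ne_of_gt hu0
  simp only [Complex.real_smul]
  rw [abs_of_pos (by linarith : (0:ℝ) < 2*u), cpow_sq_pos hu0 m]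
  push_cast
  field_simp


lemma neg_image : (fun u : ℝ => -u) '' Set.Ioo 0 1 = Set.Ioo (-1:ℝ) 0 := by
  ext v
  simp only [Set.mem_image, Set.mem_Ioo]
  constructor
  · rintro ⟨u, hu, rfl⟩; constructor <;> linarith [hu.1, hu.2]
  · intro hv; exact ⟨-v, ⟨by linarith [hv.2], by linarith [hv.1]⟩, by ring⟩

lemma neg_deriv : ∀ x ∈ Set.Ioo (0:ℝ) 1,
    HasDerivWithinAt (fun u : ℝ => -u) (-1) (Set.Ioo 0 1) x := by
  intro x _
  simpa using (hasDerivAt_neg x).hasDerivWithinAt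

lemma neg_injOn : Set.InjOn (fun u : ℝ => -u) (Set.Ioo (0:ℝ) 1) := by
  intro a _ b _ h; simpa using h

lemma g3_even (m : ℕ) (w : ℂ) (u : ℝ) :
    ((-u : ℝ):ℂ)^(2*m) * ((1 - (-u)^2 : ℝ):ℂ)^w = (u:ℂ)^(2*m) * ((1 - u^2 : ℝ):ℂ)^w := by
  rw [Complex.ofReal_neg, Even.neg_pow (even_two_mul m), neg_sq]

lemma cov_neg (m : ℕ) (w : ℂ) :
    ∫ u in Set.Ioo (-1:ℝ) 0, (u:ℂ)^(2*m) * ((1 - u^2 : ℝ):ℂ)^w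
      = ∫ u in Set.Ioo (0:ℝ) 1, (u:ℂ)^(2*m) * ((1 - u^2 : ℝ):ℂ)^w := by
  conv_lhs => rw [← neg_image]
  rw [MeasureTheory.integral_image_eq_integral_abs_deriv_smul measurableSet_Ioo
    neg_deriv neg_injOn]
  apply MeasureTheory.setIntegral_congr_fun measurableSet_Ioo
  intro u _
  simp [g3_even m w u]

lemma cov_neg_integrable (m : ℕ) (w : ℂ)
    (h : MeasureTheory.IntegrableOn
      (fun u : ℝ => (u:ℂ)^(2*m) * ((1 - u^2 : ℝ):ℂ)^w) (Set.Ioo 0 1)) :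
    MeasureTheory.IntegrableOn
      (fun u : ℝ => (u:ℂ)^(2*m) * ((1 - u^2 : ℝ):ℂ)^w) (Set.Ioo (-1:ℝ) 0) := by
  rw [← neg_image,
    MeasureTheory.integrableOn_image_iff_integrableOn_abs_deriv_smul measurableSet_Ioo
      neg_deriv neg_injOn]
  apply h.congr_fun _ measurableSet_Ioo
  intro u _
  simp [g3_even m w u]

lemma g3_total (m : ℕ) (w : ℂ) (hw : 0 < w.re + 1) :
    ∫ u in Set.Ioo (-1:ℝ) 1, (u:ℂ)^(2*m) * ((1 - u^2 : ℝ):ℂ)^w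
      = 2 * ∫ u in Set.Ioo (0:ℝ) 1, (u:ℂ)^(2*m) * ((1 - u^2 : ℝ):ℂ)^w := by
  have hsplit : Set.Ioo (-1:ℝ) 1 = Set.Ioo (-1:ℝ) 0 ∪ Set.Ico (0:ℝ) 1 := by
    ext x
    simp only [Set.mem_Ioo, Set.mem_union, Set.mem_Ico]
    constructor
    · intro h
      rcases lt_or_ge x 0 with h' | h'
      · exact Or.inl ⟨h.1, h'⟩
      · exact Or.inr ⟨h', h.2⟩
    · rintro (h | h) <;> constructor <;> linarith [h.1, h.2]
  have hi1 := cov_sq_integrable m w hw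
  have hi0 := cov_neg_integrable m w hi1
  have hico : MeasureTheory.IntegrableOn
      (fun u : ℝ => (u:ℂ)^(2*m) * ((1 - u^2 : ℝ):ℂ)^w) (Set.Ico (0:ℝ) 1) := by
    rwa [_root_.integrableOn_Ico_iff_integrableOn_Ioo]
  have hdisj : Disjoint (Set.Ioo (-1:ℝ) 0) (Set.Ico (0:ℝ) 1) := by
    rw [Set.disjoint_left]
    intro a ha hb
    simp only [Set.mem_Ioo, Set.mem_Ico] at ha hb
    linarith [ha.2, hb.1]
  rw [hsplit, MeasureTheory.setIntegral_union hdisj measurableSet_Ico hi0 hico]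
  rw [MeasureTheory.integral_Ico_eq_integral_Ioo, cov_neg]
  ring

noncomputable def r3equiv : (ℝ × ℝ × ℝ) ≃ₗ[ℝ] (Fin 3 → ℝ) where
  toFun p := ![p.1, p.2.1, p.2.2]
  invFun v := (v 0, v 1, v 2)
  map_add' p q := by
    funext i
    fin_cases i <;> simp
  map_smul' c p := by
    funext i
    fin_cases i <;> simp
  left_inv p := rfl
  right_inv v := by
    funext i
    fin_cases i <;> rfl

noncomputable def bR3 : Module.Basis (Fin 3) ℝ (ℝ × ℝ × ℝ) := Module.Basis.ofEquivFun r3equiv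

def lmap (a b c : ℝ) : (ℝ × ℝ × ℝ) →ₗ[ℝ] (ℝ × ℝ × ℝ) where
  toFun h := (h.1, h.2.1, a * h.1 + b * h.2.1 + c * h.2.2)
  map_add' x y := by
    refine Prod.ext ?_ (Prod.ext ?_ ?_) <;> dsimp <;> ring
  map_smul' t x := by
    refine Prod.ext ?_ (Prod.ext ?_ ?_) <;> dsimp <;> ring

noncomputable def cmap (a b c : ℝ) : (ℝ × ℝ × ℝ) →L[ℝ] (ℝ × ℝ × ℝ) :=
  LinearMap.toContinuousLinearMap (lmap a b c)

lemma cmap_apply (a b c : ℝ) (h : ℝ × ℝ × ℝ) :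
    cmap a b c h = (h.1, h.2.1, a * h.1 + b * h.2.1 + c * h.2.2) := rfl

lemma cmap_det (a b c : ℝ) : (cmap a b c).det = c := by
  have hcoe : ((cmap a b c) : (ℝ × ℝ × ℝ) →ₗ[ℝ] (ℝ × ℝ × ℝ)) = lmap a b c := rfl
  rw [ContinuousLinearMap.det, hcoe, ← LinearMap.det_toMatrix bR3]
  have : LinearMap.toMatrix bR3 bR3 (lmap a b c) = !![1,0,0;0,1,0;a,b,c] := by
    have e1 : ∀ p, r3equiv p = ![p.1, p.2.1, p.2.2] := fun p => rfl
    have e2 : ∀ v, r3equiv.symm v = (v 0, v 1, v 2) := fun v => rfl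
    ext i j
    rw [LinearMap.toMatrix_apply]
    fin_cases i <;> fin_cases j <;>
      simp [bR3, e1, e2, lmap, Module.Basis.ofEquivFun_repr_apply, Module.Basis.coe_ofEquivFun, Pi.single_apply]
  rw [this, Matrix.det_fin_three]
  simp

noncomputable def Phi (p : ℝ × ℝ × ℝ) : ℝ × ℝ × ℝ :=
  (p.1, p.2.1, Real.sqrt (p.1 * p.2.1) * p.2.2)

def Sset : Set (ℝ × ℝ × ℝ) := Set.Ioi 0 ×ˢ (Set.Ioi 0 ×ˢ Set.Ioo (-1 : ℝ) 1)

lemma Sset_meas : MeasurableSet Sset :=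
  (measurableSet_Ioi.prod (measurableSet_Ioi.prod measurableSet_Ioo))

lemma phi_deriv (p : ℝ × ℝ × ℝ) (hp : p ∈ Sset) :
    HasFDerivAt Phi
      (cmap (p.2.2 * (p.2.1 / (2 * Real.sqrt (p.1 * p.2.1))))
            (p.2.2 * (p.1 / (2 * Real.sqrt (p.1 * p.2.1))))
            (Real.sqrt (p.1 * p.2.1))) p := by
  obtain ⟨h1, h2, _⟩ := hp
  simp only [Set.mem_Ioi] at h1 h2
  have hq : 0 < p.1 * p.2.1 := mul_pos h1 h2
  have hm : HasFDerivAt (fun q : ℝ × ℝ × ℝ => q.1 * q.2.1)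
      (p.1 • ((ContinuousLinearMap.fst ℝ ℝ ℝ).comp (ContinuousLinearMap.snd ℝ ℝ (ℝ × ℝ))) +
        p.2.1 • (ContinuousLinearMap.fst ℝ ℝ (ℝ × ℝ))) p :=
    (hasFDerivAt_fst (p := p)).mul ((hasFDerivAt_snd (p := p)).fst)
  have hsq : HasFDerivAt (fun q : ℝ × ℝ × ℝ => Real.sqrt (q.1 * q.2.1))
      ((1 / (2 * Real.sqrt (p.1 * p.2.1))) •
        (p.1 • ((ContinuousLinearMap.fst ℝ ℝ ℝ).comp (ContinuousLinearMap.snd ℝ ℝ (ℝ × ℝ))) +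
          p.2.1 • (ContinuousLinearMap.fst ℝ ℝ (ℝ × ℝ)))) p :=
    (Real.hasDerivAt_sqrt (ne_of_gt hq)).comp_hasFDerivAt p hm
  have hphi3 : HasFDerivAt (fun q : ℝ × ℝ × ℝ => Real.sqrt (q.1 * q.2.1) * q.2.2)
      ((Real.sqrt (p.1 * p.2.1)) • ((ContinuousLinearMap.snd ℝ ℝ ℝ).comp
          (ContinuousLinearMap.snd ℝ ℝ (ℝ × ℝ))) +
        p.2.2 • ((1 / (2 * Real.sqrt (p.1 * p.2.1))) •
          (p.1 • ((ContinuousLinearMap.fst ℝ ℝ ℝ).comp (ContinuousLinearMap.snd ℝ ℝ (ℝ × ℝ))) +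
            p.2.1 • (ContinuousLinearMap.fst ℝ ℝ (ℝ × ℝ))))) p := by
    have := hsq.mul ((hasFDerivAt_snd (p := p)).snd)
    convert this using 1
    all_goals rfl
  have hD : HasFDerivAt Phi
      ((ContinuousLinearMap.fst ℝ ℝ (ℝ × ℝ)).prod
        ((((ContinuousLinearMap.fst ℝ ℝ ℝ).comp (ContinuousLinearMap.snd ℝ ℝ (ℝ × ℝ)))).prod
          ((Real.sqrt (p.1 * p.2.1)) • ((ContinuousLinearMap.snd ℝ ℝ ℝ).comp
              (ContinuousLinearMap.snd ℝ ℝ (ℝ × ℝ))) +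
            p.2.2 • ((1 / (2 * Real.sqrt (p.1 * p.2.1))) •
              (p.1 • ((ContinuousLinearMap.fst ℝ ℝ ℝ).comp (ContinuousLinearMap.snd ℝ ℝ (ℝ × ℝ))) +
                p.2.1 • (ContinuousLinearMap.fst ℝ ℝ (ℝ × ℝ))))))) p :=
    HasFDerivAt.prodMk (hasFDerivAt_fst (p := p)) (HasFDerivAt.prodMk (HasFDerivAt.fst (hasFDerivAt_snd (p := p))) hphi3)
  have heq : ((ContinuousLinearMap.fst ℝ ℝ (ℝ × ℝ)).prod
        ((((ContinuousLinearMap.fst ℝ ℝ ℝ).comp (ContinuousLinearMap.snd ℝ ℝ (ℝ × ℝ)))).prod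
          ((Real.sqrt (p.1 * p.2.1)) • ((ContinuousLinearMap.snd ℝ ℝ ℝ).comp
              (ContinuousLinearMap.snd ℝ ℝ (ℝ × ℝ))) +
            p.2.2 • ((1 / (2 * Real.sqrt (p.1 * p.2.1))) •
              (p.1 • ((ContinuousLinearMap.fst ℝ ℝ ℝ).comp (ContinuousLinearMap.snd ℝ ℝ (ℝ × ℝ))) +
                p.2.1 • (ContinuousLinearMap.fst ℝ ℝ (ℝ × ℝ)))))))
      = (cmap (p.2.2 * (p.2.1 / (2 * Real.sqrt (p.1 * p.2.1))))
            (p.2.2 * (p.1 / (2 * Real.sqrt (p.1 * p.2.1))))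
            (Real.sqrt (p.1 * p.2.1))) := by
    apply ContinuousLinearMap.ext
    intro v
    rw [cmap_apply]
    simp only [ContinuousLinearMap.prod_apply, ContinuousLinearMap.add_apply,
      ContinuousLinearMap.smul_apply, ContinuousLinearMap.comp_apply,
      ContinuousLinearMap.coe_fst', ContinuousLinearMap.coe_snd', smul_eq_mul]
    refine Prod.ext rfl (Prod.ext rfl ?_)
    dsimp
    ring
  rw [heq] at hD
  exact hD

lemma phi_image :
    Phi '' Sset = {p : ℝ × ℝ × ℝ | 0 < p.1 ∧ 0 < p.1 * p.2.1 - p.2.2 ^ 2} := by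
  ext q
  constructor
  · rintro ⟨p, ⟨h1, h2, hu⟩, rfl⟩
    simp only [Set.mem_Ioi] at h1 h2
    simp only [Set.mem_Ioo] at hu
    have hq : 0 < p.1 * p.2.1 := mul_pos h1 h2
    refine ⟨h1, ?_⟩
    show 0 < p.1 * p.2.1 - (Real.sqrt (p.1 * p.2.1) * p.2.2) ^ 2
    have hr : (Real.sqrt (p.1 * p.2.1)) ^ 2 = p.1 * p.2.1 := Real.sq_sqrt hq.le
    have hu2 : p.2.2 ^ 2 < 1 := by nlinarith [hu.1, hu.2]
    nlinarith [hq]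
  · rintro ⟨h1, h2⟩
    have h2' : q.2.2 ^ 2 < q.1 * q.2.1 := by linarith
    have hq : 0 < q.1 * q.2.1 := lt_of_le_of_lt (sq_nonneg _) h2'
    have hy2 : 0 < q.2.1 := by
      rcases le_or_gt q.2.1 0 with h | h
      · nlinarith
      · exact h
    have hrpos : 0 < Real.sqrt (q.1 * q.2.1) := Real.sqrt_pos.2 hq
    refine ⟨(q.1, q.2.1, q.2.2 / Real.sqrt (q.1 * q.2.1)), ⟨h1, hy2, ?_⟩, ?_⟩
    · have habs : |q.2.2| < Real.sqrt (q.1 * q.2.1) := by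
        have : Real.sqrt (q.2.2 ^ 2) < Real.sqrt (q.1 * q.2.1) :=
          Real.sqrt_lt_sqrt (sq_nonneg _) h2'
        rwa [Real.sqrt_sq_eq_abs] at this
      constructor
      · show -1 < q.2.2 / Real.sqrt (q.1 * q.2.1)
        rw [lt_div_iff₀ hrpos]
        have := neg_abs_le q.2.2
        linarith [abs_lt.1 habs]
      · show q.2.2 / Real.sqrt (q.1 * q.2.1) < 1
        rw [div_lt_one hrpos]
        linarith [abs_lt.1 habs, le_abs_self q.2.2]
    · show (q.1, q.2.1, Real.sqrt (q.1 * q.2.1) * (q.2.2 / Real.sqrt (q.1 * q.2.1))) = q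
      rw [mul_div_cancel₀ _ (ne_of_gt hrpos)]

lemma phi_injOn : Set.InjOn Phi Sset := by
  rintro p ⟨h1, h2, _⟩ q ⟨h1', h2', _⟩ h
  simp only [Set.mem_Ioi] at h1 h2 h1' h2'
  obtain ⟨e1, e2, e3⟩ : p.1 = q.1 ∧ p.2.1 = q.2.1 ∧
      Real.sqrt (p.1 * p.2.1) * p.2.2 = Real.sqrt (q.1 * q.2.1) * q.2.2 := by
    have := h
    simp only [Phi, Prod.ext_iff] at this
    exact ⟨this.1, this.2.1, this.2.2⟩
  have hrpos : 0 < Real.sqrt (p.1 * p.2.1) := Real.sqrt_pos.2 (mul_pos h1 h2)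
  rw [e1, e2] at e3
  have : p.2.2 = q.2.2 :=
    mul_left_cancel₀ (ne_of_gt (Real.sqrt_pos.2 (mul_pos h1' h2'))) e3
  exact Prod.ext e1 (Prod.ext e2 this)

lemma pointwise_id (n1 n2 m3 : ℕ) (s : ℂ) {y1 y2 u : ℝ}
    (h1 : 0 < y1) (h2 : 0 < y2) (hu : u ∈ Set.Ioo (-1:ℝ) 1) :
    (Real.sqrt (y1 * y2)) •
      ((y1 : ℂ) ^ n1 * (y2 : ℂ) ^ n2 * ((Real.sqrt (y1 * y2) * u : ℝ) : ℂ) ^ (2 * m3) *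
        ((y1 * y2 - (Real.sqrt (y1 * y2) * u) ^ 2 : ℝ) : ℂ) ^ (s - 3 / 2) *
        Complex.exp (-((y1 + y2 : ℝ) : ℂ)))
    = ((y1 : ℂ) ^ (s + ((n1 + m3 : ℕ) : ℂ) - 1) * Complex.exp (-(y1 : ℂ))) *
      (((y2 : ℂ) ^ (s + ((n2 + m3 : ℕ) : ℂ) - 1) * Complex.exp (-(y2 : ℂ))) *
        ((u : ℂ) ^ (2 * m3) * ((1 - u ^ 2 : ℝ) : ℂ) ^ (s - 3 / 2))) := by
  set q : ℝ := y1 * y2 with hqdef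
  have hq : 0 < q := mul_pos h1 h2
  have hr : Real.sqrt q ^ 2 = q := Real.sq_sqrt hq.le
  have hy1 : (y1 : ℂ) ≠ 0 := by exact_mod_cast ne_of_gt h1
  have hy2 : (y2 : ℂ) ≠ 0 := by exact_mod_cast ne_of_gt h2
  -- the determinant-region factor
  have harg : y1 * y2 - (Real.sqrt q * u) ^ 2 = q * (1 - u ^ 2) := by
    rw [mul_pow, hr]; ring
  rw [harg]
  -- split the cpow of the product
  have hsplit1 : ((q * (1 - u ^ 2) : ℝ) : ℂ) ^ (s - 3 / 2)
      = ((q : ℝ) : ℂ) ^ (s - 3 / 2) * ((1 - u ^ 2 : ℝ) : ℂ) ^ (s - 3 / 2) := by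
    have hu2 : (0:ℝ) ≤ 1 - u ^ 2 := by nlinarith [hu.1, hu.2]
    rw [Complex.ofReal_mul]
    exact Complex.mul_cpow_ofReal_nonneg hq.le hu2 _
  -- powers of sqrt q
  have hpow : ((Real.sqrt q * u : ℝ) : ℂ) ^ (2 * m3)
      = ((q : ℝ) : ℂ) ^ (m3 : ℕ) * (u : ℂ) ^ (2 * m3) := by
    rw [Complex.ofReal_mul, mul_pow]
    congr 1
    rw [← Complex.ofReal_pow, pow_mul, hr]
    push_cast
    ring
  -- sqrt q as cpow
  have hsqrt : ((Real.sqrt q : ℝ) : ℂ) = ((q : ℝ) : ℂ) ^ (1 / 2 : ℂ) := by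
    rw [Real.sqrt_eq_rpow, Complex.ofReal_cpow hq.le]
    norm_num
  have hqne : ((q : ℝ) : ℂ) ≠ 0 := by exact_mod_cast ne_of_gt hq
  -- combine all powers of q
  have hqcomb : ((q : ℝ) : ℂ) ^ (1 / 2 : ℂ) * (((q : ℝ) : ℂ) ^ (m3 : ℕ) *
      ((q : ℝ) : ℂ) ^ (s - 3 / 2)) = ((q : ℝ) : ℂ) ^ (s + (m3 : ℂ) - 1) := by
    rw [← Complex.cpow_natCast, ← Complex.cpow_add _ _ hqne, ← Complex.cpow_add _ _ hqne]
    congr 1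
    ring
  -- split q power into y1, y2 powers
  have hqsplit : ((q : ℝ) : ℂ) ^ (s + (m3 : ℂ) - 1)
      = (y1 : ℂ) ^ (s + (m3 : ℂ) - 1) * (y2 : ℂ) ^ (s + (m3 : ℂ) - 1) := by
    rw [hqdef, Complex.ofReal_mul]
    exact Complex.mul_cpow_ofReal_nonneg h1.le h2.le _
  -- natural powers into cpow
  have hn1 : (y1 : ℂ) ^ n1 * (y1 : ℂ) ^ (s + (m3 : ℂ) - 1)
      = (y1 : ℂ) ^ (s + ((n1 + m3 : ℕ) : ℂ) - 1) := by
    rw [← Complex.cpow_natCast, ← Complex.cpow_add _ _ hy1]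
    congr 1
    push_cast
    ring
  have hn2 : (y2 : ℂ) ^ n2 * (y2 : ℂ) ^ (s + (m3 : ℂ) - 1)
      = (y2 : ℂ) ^ (s + ((n2 + m3 : ℕ) : ℂ) - 1) := by
    rw [← Complex.cpow_natCast, ← Complex.cpow_add _ _ hy2]
    congr 1
    push_cast
    ring
  have hexp : Complex.exp (-((y1 + y2 : ℝ) : ℂ))
      = Complex.exp (-(y1 : ℂ)) * Complex.exp (-(y2 : ℂ)) := by
    rw [← Complex.exp_add]
    push_cast
    ring_nf
  rw [hsplit1, hpow, Complex.real_smul, hsqrt, hexp, ← hn1, ← hn2]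
  rw [hqsplit] at hqcomb
  linear_combination ((y1:ℂ)^n1 * (y2:ℂ)^n2 * (u:ℂ)^(2*m3) * ((1-u^2:ℝ):ℂ)^(s-3/2) *
    Complex.exp (-(y1:ℂ)) * Complex.exp (-(y2:ℂ))) * hqcomb

instance : MeasureTheory.Measure.IsAddHaarMeasure (volume : Measure (ℝ × ℝ)) :=
  MeasureTheory.Measure.prod.instIsAddHaarMeasure _ _

instance : MeasureTheory.Measure.IsAddHaarMeasure (volume : Measure (ℝ × ℝ × ℝ)) :=
  MeasureTheory.Measure.prod.instIsAddHaarMeasure _ _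

lemma main_cov (n1 n2 m3 : ℕ) (s : ℂ) :
    ∫ p in {p : ℝ × ℝ × ℝ | 0 < p.1 ∧ 0 < p.1 * p.2.1 - p.2.2 ^ 2},
      (p.1 : ℂ) ^ n1 * (p.2.1 : ℂ) ^ n2 * (p.2.2 : ℂ) ^ (2 * m3) *
        ((p.1 * p.2.1 - p.2.2 ^ 2 : ℝ) : ℂ) ^ (s - 3 / 2) *
        Complex.exp (-((p.1 + p.2.1 : ℝ) : ℂ))
    = (∫ y in Set.Ioi (0:ℝ), (y:ℂ)^(s + ((n1+m3:ℕ):ℂ) - 1) * Complex.exp (-(y:ℂ))) *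
      ((∫ y in Set.Ioi (0:ℝ), (y:ℂ)^(s + ((n2+m3:ℕ):ℂ) - 1) * Complex.exp (-(y:ℂ))) *
       (∫ u in Set.Ioo (-1:ℝ) 1, (u:ℂ)^(2*m3) * ((1-u^2:ℝ):ℂ)^(s - 3/2))) := by
  rw [← phi_image]
  rw [integral_image_eq_integral_abs_det_fderiv_smul volume Sset_meas
    (fun p hp => (phi_deriv p hp).hasFDerivWithinAt) phi_injOn]
  have hcongr : ∀ p ∈ Sset,
      |(cmap (p.2.2 * (p.2.1 / (2 * Real.sqrt (p.1 * p.2.1))))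
          (p.2.2 * (p.1 / (2 * Real.sqrt (p.1 * p.2.1))))
          (Real.sqrt (p.1 * p.2.1))).det| •
        (((Phi p).1 : ℂ) ^ n1 * ((Phi p).2.1 : ℂ) ^ n2 * ((Phi p).2.2 : ℂ) ^ (2 * m3) *
          (((Phi p).1 * (Phi p).2.1 - (Phi p).2.2 ^ 2 : ℝ) : ℂ) ^ (s - 3 / 2) *
          Complex.exp (-(((Phi p).1 + (Phi p).2.1 : ℝ) : ℂ)))
      = ((p.1 : ℂ) ^ (s + ((n1+m3:ℕ):ℂ) - 1) * Complex.exp (-(p.1:ℂ))) *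
        (((p.2.1 : ℂ) ^ (s + ((n2+m3:ℕ):ℂ) - 1) * Complex.exp (-(p.2.1:ℂ))) *
         ((p.2.2:ℂ)^(2*m3) * ((1-p.2.2^2:ℝ):ℂ)^(s - 3/2))) := by
    intro p hp
    obtain ⟨h1, h2, hu⟩ := hp
    simp only [Set.mem_Ioi] at h1 h2
    rw [cmap_det, abs_of_nonneg (Real.sqrt_nonneg _)]
    have hpt := pointwise_id n1 n2 m3 s h1 h2 hu
    simp only [Phi]
    exact hpt
  rw [MeasureTheory.setIntegral_congr_fun Sset_meas hcongr]
  rw [show Sset = Set.Ioi (0:ℝ) ×ˢ (Set.Ioi (0:ℝ) ×ˢ Set.Ioo (-1 : ℝ) 1) from rfl]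
  rw [MeasureTheory.Measure.volume_eq_prod,
    MeasureTheory.setIntegral_prod_mul
      (fun y : ℝ => (y:ℂ)^(s + ((n1+m3:ℕ):ℂ) - 1) * Complex.exp (-(y:ℂ)))
      (fun q : ℝ × ℝ => (q.1:ℂ)^(s + ((n2+m3:ℕ):ℂ) - 1) * Complex.exp (-(q.1:ℂ)) *
        ((q.2:ℂ)^(2*m3) * ((1-q.2^2:ℝ):ℂ)^(s - 3/2)))]
  congr 1
  rw [MeasureTheory.Measure.volume_eq_prod,
    MeasureTheory.setIntegral_prod_mul
      (fun y : ℝ => (y:ℂ)^(s + ((n2+m3:ℕ):ℂ) - 1) * Complex.exp (-(y:ℂ)))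
      (fun u : ℝ => (u:ℂ)^(2*m3) * ((1-u^2:ℝ):ℂ)^(s - 3/2))]


open MeasureTheory

/-- The rank-two Gamma function `Γ₂(s) = √π Γ(s) Γ(s - 1/2)`. -/
noncomputable def Gamma2 (s : ℂ) : ℂ :=
  (Real.sqrt Real.pi : ℂ) * Complex.Gamma s * Complex.Gamma (s - 1 / 2)

theorem integral_even_offdiag (n1 n2 m3 : ℕ) (s : ℂ) (hs : 1 / 2 < s.re) :
    ∫ p in {p : ℝ × ℝ × ℝ | 0 < p.1 ∧ 0 < p.1 * p.2.1 - p.2.2 ^ 2},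
      (p.1 : ℂ) ^ n1 * (p.2.1 : ℂ) ^ n2 * (p.2.2 : ℂ) ^ (2 * m3) *
        ((p.1 * p.2.1 - p.2.2 ^ 2 : ℝ) : ℂ) ^ (s - 3 / 2) *
        Complex.exp (-((p.1 + p.2.1 : ℝ) : ℂ)) =
    Gamma2 s * (((2 * m3).factorial : ℂ) / (2 ^ (2 * m3) * (m3.factorial : ℂ))) *
      ∑ k ∈ Finset.range (min n1 n2 + 1),
        (-1) ^ k * (n1.choose k : ℂ) * (n2.choose k : ℂ) * (k.factorial : ℂ) *
          ∏ l ∈ Finset.range (n1 + n2 + m3 - k), (s + l) := by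
  have h0 : 0 < s.re := by linarith
  have h12 : 0 < (s - 1/2).re := by
    rw [Complex.sub_re]
    norm_num
    linarith
  rw [main_cov n1 n2 m3 s]
  rw [gamma_int (s + ((n1+m3:ℕ):ℂ)) (by rw [Complex.add_re, Complex.natCast_re]; positivity),
    gamma_int (s + ((n2+m3:ℕ):ℂ)) (by rw [Complex.add_re, Complex.natCast_re]; positivity)]
  have hw : 0 < (s - 3/2).re + 1 := by
    rw [Complex.sub_re]
    norm_num
    linarith
  rw [g3_total m3 (s - 3/2) hw]
  -- identify the (0,1) integral with the Beta integral
  have hbeta : Complex.betaIntegral ((m3:ℂ) + 1/2) (s - 1/2)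
      = 2 * ∫ u in Set.Ioo (0:ℝ) 1, (u:ℂ)^(2*m3) * ((1-u^2:ℝ):ℂ)^(s - 3/2) := by
    rw [beta_Ioo, ← cov_sq m3 (s - 3/2)]
    apply MeasureTheory.setIntegral_congr_fun measurableSet_Ioo
    intro v _
    have : ((m3:ℂ) + 1/2) - 1 = (m3:ℂ) + 1/2 - 1 := by ring
    have he2 : (s - 1/2) - 1 = s - 3/2 := by ring
    rw [he2]
  rw [← hbeta]
  -- Beta in terms of Gamma
  have hm12 : 0 < ((m3:ℂ) + 1/2).re := by
    rw [Complex.add_re, Complex.natCast_re]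
    norm_num
    positivity
  have hbg := Complex.Gamma_mul_Gamma_eq_betaIntegral hm12 h12
  have hsum : ((m3:ℂ) + 1/2) + (s - 1/2) = s + (m3:ℂ) := by ring
  rw [hsum] at hbg
  have hGsm3 : Complex.Gamma (s + (m3:ℂ)) ≠ 0 :=
    Complex.Gamma_ne_zero_of_re_pos (by rw [Complex.add_re, Complex.natCast_re]; positivity)
  -- expand Gammas as shifted products
  have hG1 := Gamma_shift s h0 (n1+m3)
  have hG2 := Gamma_shift s h0 (n2+m3)
  have hG3 := Gamma_shift s h0 m3
  have hGh := Gamma_half m3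
  -- rewrite the sum
  have hsum2 : (∑ k ∈ Finset.range (min n1 n2 + 1),
        (-1:ℂ) ^ k * (n1.choose k : ℂ) * (n2.choose k : ℂ) * (k.factorial : ℂ) *
          ∏ l ∈ Finset.range (n1 + n2 + m3 - k), (s + l))
      = (∏ l ∈ Finset.range m3, (s + l)) *
        ((∏ l ∈ Finset.range n1, (s + (m3:ℂ) + l)) * ∏ l ∈ Finset.range n2, (s + (m3:ℂ) + l)) := by
    rw [← poch_min (s + (m3:ℂ)) n1 n2, Finset.mul_sum]
    apply Finset.sum_congr rfl
    intro k hk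
    have hk' : k ≤ min n1 n2 := by simpa [Nat.lt_succ_iff] using hk
    have hidx : n1 + n2 + m3 - k = m3 + (n1 + n2 - k) := by omega
    rw [hidx, Finset.prod_range_add]
    have : ∀ j ∈ Finset.range (n1 + n2 - k), (s + ((m3 + j : ℕ) : ℂ)) = (s + (m3:ℂ) + j) := by
      intro j _
      push_cast
      ring
    rw [Finset.prod_congr rfl this]
    ring
  have hsplit1 : (∏ l ∈ Finset.range (n1+m3), (s + l))
      = (∏ l ∈ Finset.range m3, (s + l)) * ∏ l ∈ Finset.range n1, (s + (m3:ℂ) + l) := by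
    rw [show n1 + m3 = m3 + n1 by omega, Finset.prod_range_add]
    congr 1
    apply Finset.prod_congr rfl
    intro j _
    push_cast
    ring
  have hsplit2 : (∏ l ∈ Finset.range (n2+m3), (s + l))
      = (∏ l ∈ Finset.range m3, (s + l)) * ∏ l ∈ Finset.range n2, (s + (m3:ℂ) + l) := by
    rw [show n2 + m3 = m3 + n2 by omega, Finset.prod_range_add]
    congr 1
    apply Finset.prod_congr rfl
    intro j _
    push_cast
    ring
  -- final algebra
  apply mul_left_cancel₀ hGsm3
  unfold Gamma2
  rw [hsum2, hG1, hG2, hsplit1, hsplit2]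
  rw [hG3] at hbg hGsm3 ⊢
  rw [hGh] at hbg
  have h2m : ((2:ℂ))^(2*m3) * (m3.factorial : ℂ) ≠ 0 := by
    apply mul_ne_zero (pow_ne_zero _ two_ne_zero)
    exact_mod_cast Nat.factorial_ne_zero m3
  field_simp at hbg ⊢
  linear_combination (-(Complex.Gamma s)^2 * (∏ l ∈ Finset.range m3, (s + (l:ℂ)))^2 *
    (∏ l ∈ Finset.range n1, (s + (m3:ℂ) + l)) *
    (∏ l ∈ Finset.range n2, (s + (m3:ℂ) + l))) * hbg
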